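/- Let τ ⊂ ℚ^n be a full-dimensional strongly convex rational polyhedral cone, 𝔛 its affine fan, and (𝔛, !𝔅, *ℭ) a fan triple. Let 𝔛' be a subdivision of 𝔛 with full-dimensional cones τ₁, …, τ_k, carrying a fan triple (𝔛', !𝔅', *ℭ') such that: (i) for every ray ν' ∈ 𝔅', the smallest face of τ containing ν' has a ray lying in 𝔅; (ii) every ray of ℭ' that is a face of τ lies in ℭ; (iii) 𝔅 ⊆ 𝔅'; (iv) every ray ν' of 𝔛' whose smallest containing face of τ has a ray in ℭ and no ray in 𝔅 lies in ℭ'. For each face ζ of τ and each i, let Ξ_i(ζ) denote the largest face of τ_i contained in ζ (it exists and is unique). Define φ(ζ) ⊆ (ℚ^n)^* by: φ(ζ) = the zero subspace if some ray of ζ lies in 𝔅; otherwise φ(ζ) = ⋂ { ν^⊥ : ν a ray of ζ with ν ∉ 𝔅 ∪ ℭ } (the intersection over the empty family being all of (ℚ^n)^*); define φ_i on the faces of τ_i analogously, using the rays of τ_i lying in 𝔅' and in ℭ'. Then for every face ζ of τ: φ(ζ) = ⋂_{i=1}^{k} φ_i(Ξ_i(ζ)). (This is the combinatorial content of the pushforward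 formula f_* Ωᵖ_{(X',!B',*C')} = Ωᵖ_{(X,!B,*C)} for the toric birational morphism given by the subdivision.) -/

import Mathlib

namespace ToricPaper

open scoped BigOperators

/-- The ambient space `N_ℚ = ℚ^n`. -/
abbrev V (n : ℕ) := Fin n → ℚ

variable {n : ℕ}

/-- The cone of nonnegative rational combinations of elements of `A`. -/
def coneHull (A : Set (V n)) : Set (V n) :=
  {x | ∃ t : Finset (V n), ↑t ⊆ A ∧ ∃ c : V n → ℚ,
    (∀ v ∈ t, 0 ≤ c v) ∧ x = ∑ v ∈ t, c v • v}

/-- A rational polyhedral cone: the cone generated by finitely many vectors. -/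
def IsPolyCone (σ : Set (V n)) : Prop := ∃ S : Finset (V n), σ = coneHull (S : Set (V n))

/-- A cone is strongly convex if it contains no line. -/
def StronglyConvex (σ : Set (V n)) : Prop := ∀ x ∈ σ, -x ∈ σ → x = 0

/-- `F` is a face of `σ`, cut out by a linear functional nonnegative on `σ`. -/
def IsFaceOf (F σ : Set (V n)) : Prop :=
  ∃ m : (V n) →ₗ[ℚ] ℚ, (∀ x ∈ σ, 0 ≤ m x) ∧ F = {x ∈ σ | m x = 0}

/-- Dimension of a cone: the rank of its linear span. -/
noncomputable def coneDim (σ : Set (V n)) : ℕ := Module.finrank ℚ (Submodule.span ℚ σ)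

/-- A ray of a cone is a one-dimensional face. -/
def IsRayOf (ν σ : Set (V n)) : Prop := IsFaceOf ν σ ∧ coneDim ν = 1

/-- An abstract ray: a one-dimensional strongly convex rational polyhedral cone. -/
def IsRay (ν : Set (V n)) : Prop := IsPolyCone ν ∧ StronglyConvex ν ∧ coneDim ν = 1

/-- All faces of a cone `τ` (the affine fan induced by `τ`). -/
def faces (τ : Set (V n)) : Set (Set (V n)) := {F | IsFaceOf F τ}

/-- The rays of a cone `τ`. -/
def raysOf (τ : Set (V n)) : Set (Set (V n)) := {ν | IsRayOf ν τ}

/-- A fan: a finite collection of strongly convex rational polyhedral cones, closed under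
taking faces, such that the intersection of two cones is a face of each. -/
def IsFan (X : Set (Set (V n))) : Prop :=
  X.Finite ∧ (∀ σ ∈ X, IsPolyCone σ ∧ StronglyConvex σ) ∧
  (∀ σ ∈ X, ∀ F, IsFaceOf F σ → F ∈ X) ∧
  (∀ σ ∈ X, ∀ σ' ∈ X, IsFaceOf (σ ∩ σ') σ ∧ IsFaceOf (σ ∩ σ') σ')

/-- The rays (one-dimensional cones) belonging to a collection of cones. -/
def raysIn (X : Set (Set (V n))) : Set (Set (V n)) := {ν | ν ∈ X ∧ coneDim ν = 1}

/-- The support of a collection of cones. -/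
def support (X : Set (Set (V n))) : Set (V n) := ⋃₀ X

/-- The data of a fan quadruple `(X, !B, *C, !*H)`: three pairwise disjoint sets of rays. -/
def IsQuadData (X B C H : Set (Set (V n))) : Prop :=
  B ⊆ raysIn X ∧ C ⊆ raysIn X ∧ H ⊆ raysIn X ∧ Disjoint B C ∧ Disjoint B H ∧ Disjoint C H

/-- The data of a fan triple `(X, !B, *C)`: two disjoint sets of rays. -/
def IsTripleData (X B C : Set (Set (V n))) : Prop :=
  B ⊆ raysIn X ∧ C ⊆ raysIn X ∧ Disjoint B C

/-- `ρ` is a sorting function for the (restricted) quadruple on the faces of `ξ`: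
nonnegative on rays of `ξ` in `B`, nonpositive on rays of `ξ` in `C`, zero on rays of `ξ`
in none of `B`, `C`, `H`. -/
def IsSortingOn (ξ : Set (V n)) (B C H : Set (Set (V n))) (ρ : (V n) →ₗ[ℚ] ℚ) : Prop :=
  (∀ ν, IsRayOf ν ξ → ν ∈ B → ∀ x ∈ ν, 0 ≤ ρ x) ∧
  (∀ ν, IsRayOf ν ξ → ν ∈ C → ∀ x ∈ ν, ρ x ≤ 0) ∧
  (∀ ν, IsRayOf ν ξ → ν ∉ B → ν ∉ C → ν ∉ H → ∀ x ∈ ν, ρ x = 0)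

/-- The (restricted) affine quadruple on the faces of `ξ` admits a `Cf`-strict sorting
function: a sorting function which is moreover negative on `ν ∖ {0}` for every `ν ∈ Cf`. -/
def HasStrictSortingOn (ξ : Set (V n)) (B C H Cf : Set (Set (V n))) : Prop :=
  ∃ ρ : (V n) →ₗ[ℚ] ℚ, IsSortingOn ξ B C H ρ ∧
    ∀ ν, IsRayOf ν ξ → ν ∈ Cf → ∀ x ∈ ν, x ≠ 0 → ρ x < 0

/-- A cone `ξ` is `E`-unsettled if no ray of `ξ` lies in `E`. -/
def Unsettled (E : Set (Set (V n))) (ξ : Set (V n)) : Prop := ∀ ν, IsRayOf ν ξ → ν ∉ E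

/-- The quadruple `(X, !B, *C, !*H)` is `(Bs, Cf, Hs)`-sorted. -/
def SortedOn (X B C H Bs Cf Hs : Set (Set (V n))) : Prop :=
  ∀ ξ ∈ X, Unsettled ((B \ Bs) ∪ (H \ Hs)) ξ → HasStrictSortingOn ξ B C H Cf

/-- Partially-sorted: `(∅, C, ∅)`-sorted. -/
def PartiallySortedOn (X B C H : Set (Set (V n))) : Prop := SortedOn X B C H ∅ C ∅

/-- Well-sorted: `(B, C, H)`-sorted. -/
def WellSortedOn (X B C H : Set (Set (V n))) : Prop := SortedOn X B C H B C H

/-- A simplicial cone is generated by linearly independent vectors. -/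
def IsSimplicialCone (σ : Set (V n)) : Prop :=
  ∃ S : Finset (V n), LinearIndependent ℚ (fun v : S => (v : V n)) ∧
    σ = coneHull (S : Set (V n))

/-- A collection of cones is `E`-simplicial: every cone having a ray of `E` as a face is the
join of that ray with a cone of the collection of one less dimension. -/
def ESimplicialOn (X E : Set (Set (V n))) : Prop :=
  ∀ ν ∈ E, ∀ σ ∈ X, IsFaceOf ν σ →
    ∃ ζ ∈ X, σ = coneHull (ζ ∪ ν) ∧ coneDim σ = coneDim ζ + 1

/-- A subdivision of a fan: a fan with the same support, every cone of which is contained in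
a cone of the base. -/
def IsSubdivision (X' X : Set (Set (V n))) : Prop :=
  IsFan X' ∧ support X' = support X ∧ ∀ σ' ∈ X', ∃ σ ∈ X, σ' ⊆ σ

/-- A subdivision is efficient if it introduces no new rays. -/
def IsEfficient (X' X : Set (Set (V n))) : Prop := raysIn X' = raysIn X

/-- `ψ` is a good (convex piecewise-linear) function for the subdivision `X'` relative to the
cones of the base fan `X`: on each cone `τ` of `X`, `ψ` is convex, linear on each cone of
`X'` contained in `τ`, and the maximal subcones of linearity of `ψ` inside `τ` are exactly
the cones of `X'` (i.e. any convex subset of `τ` on which `ψ` is linear lies in one of them). -/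
def IsGoodFor (X X' : Set (Set (V n))) (ψ : V n → ℚ) : Prop :=
  ∀ τ ∈ X, ConvexOn ℚ τ ψ ∧
    (∀ σ' ∈ X', σ' ⊆ τ → ∃ m : (V n) →ₗ[ℚ] ℚ, ∀ x ∈ σ', ψ x = m x) ∧
    (∀ (m : (V n) →ₗ[ℚ] ℚ) (t : Set (V n)), t ⊆ τ → Convex ℚ t →
      (∀ x ∈ t, ψ x = m x) → ∃ σ' ∈ X', σ' ⊆ τ ∧ t ⊆ σ')

/-- Sign conditions of a good sorting function with respect to the quadruple data on `X'`. -/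
def SignedOn (X' B' C' H' : Set (Set (V n))) (ψ : V n → ℚ) : Prop :=
  (∀ ν ∈ B', ∀ x ∈ ν, 0 ≤ ψ x) ∧ (∀ ν ∈ C', ∀ x ∈ ν, ψ x ≤ 0) ∧
  (∀ ν ∈ raysIn X', ν ∉ B' → ν ∉ C' → ν ∉ H' → ∀ x ∈ ν, ψ x = 0)

/-- Sign conditions restricted to the rays contained in a cone `τ`. -/
def SignedOnIn (τ : Set (V n)) (X' B' C' H' : Set (Set (V n))) (ψ : V n → ℚ) : Prop :=
  (∀ ν ∈ B', ν ⊆ τ → ∀ x ∈ ν, 0 ≤ ψ x) ∧ (∀ ν ∈ C', ν ⊆ τ → ∀ x ∈ ν, ψ x ≤ 0) ∧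
  (∀ ν ∈ raysIn X', ν ⊆ τ → ν ∉ B' → ν ∉ C' → ν ∉ H' → ∀ x ∈ ν, ψ x = 0)

/-- A convex subdivision, with respect to a fan quadruple structure on `X'`. -/
def IsConvexSubdiv (X' X B' C' H' : Set (Set (V n))) : Prop :=
  IsSubdivision X' X ∧ ∃ ψ : V n → ℚ, IsGoodFor X X' ψ ∧ SignedOn X' B' C' H' ψ

/-- A locally-convex subdivision: for each cone of the base there is a good sorting function
on that cone. -/
def IsLocallyConvexSubdiv (X' X B' C' H' : Set (Set (V n))) : Prop :=
  IsSubdivision X' X ∧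
    ∀ τ ∈ X, ∃ ψ : V n → ℚ, IsGoodFor {τ} X' ψ ∧ SignedOnIn τ X' B' C' H' ψ

/-- Star subdivision of `X` at a ray `ν` contained in the support of `X`. -/
def starSubdiv (X : Set (Set (V n))) (ν : Set (V n)) : Set (Set (V n)) :=
  {σ | σ ∈ X ∧ ¬ ν ⊆ σ} ∪
  {τ | ∃ σ ∈ X, ν ⊆ σ ∧ ∃ ξ, IsFaceOf ξ σ ∧ ¬ ν ⊆ ξ ∧ τ = coneHull (ξ ∪ ν)}

/-- The set `S` of facets used in the extension construction `Ext(𝔗, ν)`. -/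
noncomputable def extS (τ ν : Set (V n)) : Set (Set (V n)) :=
  if coneDim (coneHull (τ ∪ ν)) = coneDim τ + 1 then {τ}
  else {ζ | (IsFaceOf ζ τ ∧ coneDim ζ + 1 = coneDim τ) ∧
    ∃ m : (V n) →ₗ[ℚ] ℚ, (∀ x ∈ ζ, m x = 0) ∧ (∃ v ∈ ν, v ≠ 0 ∧ m v = -1) ∧
      ∀ x ∈ τ, x ∉ ζ → 0 < m x}

/-- All faces of cones of `extS τ ν`. -/
noncomputable def extFaces (τ ν : Set (V n)) : Set (Set (V n)) :=
  {ξ | ∃ ζ ∈ extS τ ν, IsFaceOf ξ ζ}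

/-- The extension `Ext(𝔗, ν)` of the affine fan of `τ` by the ray `ν`. -/
noncomputable def Ext (τ ν : Set (V n)) : Set (Set (V n)) :=
  {ν} ∪ faces τ ∪ (fun ξ => coneHull (ξ ∪ ν)) '' extFaces τ ν

/-- The extension `Ext(𝔗', ν)` of a subdivision `𝒯'` of the affine fan of `τ` by the ray
`ν`. -/
noncomputable def ExtSub (T' : Set (Set (V n))) (τ ν : Set (V n)) : Set (Set (V n)) :=
  {ν} ∪ T' ∪ (fun ξ => coneHull (ξ ∪ ν)) ''
    {ξ | ∃ ζ' ∈ T', (∃ ζ ∈ extS τ ν, ζ' ⊆ ζ) ∧ IsFaceOf ξ ζ'}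

/-- Sequential convexity of a sequence of star subdivisions (the list gives the rays in the
order in which the star subdivisions are performed). -/
def SeqConvex (B C H : Set (Set (V n))) : Set (Set (V n)) → List (Set (V n)) → Prop
  | _, [] => True
  | X, ν :: rest =>
      IsLocallyConvexSubdiv (starSubdiv X ν) X B C H ∧
      SeqConvex B C H (starSubdiv X ν) rest

/-- The annihilator of a set `s ⊆ ℚ^n` in the dual space. -/
def perpOf (s : Set (V n)) : Submodule ℚ (Module.Dual ℚ (V n)) where
  carrier := {m | ∀ x ∈ s, m x = 0}
  add_mem' := by
    intro a b ha hb x hx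
    simp [LinearMap.add_apply, ha x hx, hb x hx]
  zero_mem' := by
    intro x hx
    rfl
  smul_mem' := by
    intro c a ha x hx
    simp [LinearMap.smul_apply, ha x hx]

open Classical in
/-- The map `φ` attached to a fan triple: `φ(ζ) = 0` if some ray of `ζ` lies in `B`, and
otherwise `φ(ζ) = ⋂ { ν^⊥ : ν a ray of ζ, ν ∉ B ∪ C }`. -/
noncomputable def phiMap (B C : Set (Set (V n))) (ζ : Set (V n)) :
    Submodule ℚ (Module.Dual ℚ (V n)) :=
  if ∃ ν ∈ B, IsRayOf ν ζ then ⊥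
  else ⨅ ν ∈ {ν | IsRayOf ν ζ ∧ ν ∉ B ∪ C}, perpOf ν


section Lemmas
open Classical

variable {n : ℕ}

lemma subset_coneHull (A : Set (V n)) : A ⊆ coneHull A := by
  intro x hx
  exact ⟨{x}, by simpa using hx, fun _ => 1, fun _ _ => zero_le_one, by simp⟩

lemma zero_mem_coneHull (A : Set (V n)) : (0 : V n) ∈ coneHull A :=
  ⟨∅, by simp, fun _ => 0, fun _ _ => le_refl _, by simp⟩

lemma coneHull_mono {A B : Set (V n)} (h : A ⊆ B) : coneHull A ⊆ coneHull B := by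
  rintro x ⟨t, ht, c, hc, rfl⟩
  exact ⟨t, ht.trans h, c, hc, rfl⟩

lemma smul_mem_coneHull {A : Set (V n)} {x : V n} {r : ℚ} (hx : x ∈ coneHull A)
    (hr : 0 ≤ r) : r • x ∈ coneHull A := by
  obtain ⟨t, ht, c, hc, rfl⟩ := hx
  refine ⟨t, ht, fun v => r * c v, fun v hv => mul_nonneg hr (hc v hv), ?_⟩
  rw [Finset.smul_sum]
  exact Finset.sum_congr rfl fun v hv => by rw [mul_smul]

lemma add_mem_coneHull {A : Set (V n)} {x y : V n} (hx : x ∈ coneHull A)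
    (hy : y ∈ coneHull A) : x + y ∈ coneHull A := by
  obtain ⟨t₁, ht₁, c₁, hc₁, rfl⟩ := hx
  obtain ⟨t₂, ht₂, c₂, hc₂, rfl⟩ := hy
  refine ⟨t₁ ∪ t₂,
    by rw [Finset.coe_union]; exact Set.union_subset ht₁ ht₂,
    fun v => (if v ∈ t₁ then c₁ v else 0) + (if v ∈ t₂ then c₂ v else 0),
    fun v hv => add_nonneg (by split_ifs with h; exacts [hc₁ v h, le_refl _])
      (by split_ifs with h; exacts [hc₂ v h, le_refl _]), ?_⟩
  have key : ∀ (t : Finset (V n)) (c : V n → ℚ), t ⊆ t₁ ∪ t₂ →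
      ∑ v ∈ t₁ ∪ t₂, (if v ∈ t then c v else 0) • v = ∑ v ∈ t, c v • v := by
    intro t c hsub
    rw [← Finset.sum_subset hsub (fun v _ hv => by rw [if_neg hv, zero_smul])]
    exact Finset.sum_congr rfl fun v hv => by rw [if_pos hv]
  show _ = ∑ v ∈ t₁ ∪ t₂, ((if v ∈ t₁ then c₁ v else 0) + (if v ∈ t₂ then c₂ v else 0)) • v
  symm
  calc ∑ v ∈ t₁ ∪ t₂, ((if v ∈ t₁ then c₁ v else 0) + (if v ∈ t₂ then c₂ v else 0)) • v
      = ∑ v ∈ t₁ ∪ t₂, ((if v ∈ t₁ then c₁ v else 0) • v + (if v ∈ t₂ then c₂ v else 0) • v) :=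
        Finset.sum_congr rfl fun v _ => add_smul _ _ _
    _ = _ := by
        rw [Finset.sum_add_distrib, key t₁ c₁ Finset.subset_union_left,
          key t₂ c₂ Finset.subset_union_right]

lemma coneHull_subset_span (A : Set (V n)) :
    coneHull A ⊆ (Submodule.span ℚ A : Submodule ℚ (V n)) := by
  rintro x ⟨t, ht, c, hc, rfl⟩
  exact Submodule.sum_mem _ fun v hv =>
    Submodule.smul_mem _ _ (Submodule.subset_span (ht hv))

lemma mem_coneHull_insert_iff {A : Set (V n)} {v x : V n} :
    x ∈ coneHull (insert v A) ↔ ∃ r : ℚ, 0 ≤ r ∧ ∃ y ∈ coneHull A, x = y + r • v := by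
  constructor
  · rintro ⟨t, ht, c, hc, rfl⟩
    by_cases hv : v ∈ t
    · refine ⟨c v, hc v hv, ∑ w ∈ t.erase v, c w • w, ⟨t.erase v, ?_, c,
        fun w hw => hc w (Finset.mem_of_mem_erase hw), rfl⟩, ?_⟩
      · intro w hw
        rcases ht (Finset.mem_coe.mpr (Finset.mem_of_mem_erase hw)) with h | h
        · exact absurd h (Finset.ne_of_mem_erase hw)
        · exact h
      · rw [add_comm, ← Finset.add_sum_erase _ (fun w => c w • w) hv]
    · refine ⟨0, le_refl _, ∑ w ∈ t, c w • w, ⟨t, ?_, c, hc, rfl⟩, by simp⟩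
      intro w hw
      rcases ht hw with h | h
      · exact absurd (h ▸ hw) (by simpa using hv)
      · exact h
  · rintro ⟨r, hr, y, hy, rfl⟩
    exact add_mem_coneHull (coneHull_mono (Set.subset_insert _ _) hy)
      (smul_mem_coneHull (subset_coneHull _ (Set.mem_insert _ _)) hr)

end Lemmas
section Weyl
open Classical

variable {n : ℕ}

lemma coneHull_empty : coneHull (∅ : Set (V n)) = {0} := by
  ext x
  constructor
  · rintro ⟨t, ht, c, hc, rfl⟩
    have : t = ∅ := Finset.coe_eq_empty.mp (Set.subset_empty_iff.mp ht)
    simp [this]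
  · rintro rfl
    exact zero_mem_coneHull _

theorem exists_dualRep (S : Finset (V n)) :
    ∃ L : Finset (Module.Dual ℚ (V n)), coneHull (S : Set (V n)) = {x | ∀ ℓ ∈ L, 0 ≤ ℓ x} := by
  classical
  induction S using Finset.induction_on with
  | empty =>
    refine ⟨(Finset.univ.image fun i : Fin n => (LinearMap.proj i : (V n) →ₗ[ℚ] ℚ)) ∪
      (Finset.univ.image fun i : Fin n => -(LinearMap.proj i : (V n) →ₗ[ℚ] ℚ)), ?_⟩
    rw [Finset.coe_empty, coneHull_empty]
    ext x
    simp only [Set.mem_singleton_iff, Set.mem_setOf_eq, Finset.mem_union, Finset.mem_image,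
      Finset.mem_univ, true_and]
    constructor
    · rintro rfl ℓ hℓ
      rcases hℓ with ⟨i, _, rfl⟩ | ⟨i, _, rfl⟩ <;> simp
    · intro h
      funext i
      have h1 := h (LinearMap.proj i) (Or.inl ⟨i, rfl⟩)
      have h2 := h (-(LinearMap.proj i)) (Or.inr ⟨i, rfl⟩)
      simp only [LinearMap.proj_apply, LinearMap.neg_apply, Left.nonneg_neg_iff] at h1 h2
      exact le_antisymm h2 h1
  | @insert v S hvS ih =>
    obtain ⟨L, hL⟩ := ih
    refine ⟨(L.filter fun ℓ => ℓ v = 0) ∪ (L.filter fun ℓ => 0 < ℓ v) ∪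
      (((L ×ˢ L).filter fun p => 0 < p.1 v ∧ p.2 v < 0).image
        fun p => p.1 v • p.2 - p.2 v • p.1), ?_⟩
    have papp : ∀ (ℓ₁ ℓ₂ : Module.Dual ℚ (V n)) (z : V n),
        (ℓ₁ v • ℓ₂ - ℓ₂ v • ℓ₁) z = ℓ₁ v * ℓ₂ z - ℓ₂ v * ℓ₁ z := by
      intro ℓ₁ ℓ₂ z
      simp [LinearMap.sub_apply, LinearMap.smul_apply, smul_eq_mul]
    ext x
    rw [Finset.coe_insert, mem_coneHull_insert_iff]
    simp only [Set.mem_setOf_eq, Finset.mem_union, Finset.mem_filter, Finset.mem_image,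
      Finset.mem_product]
    constructor
    · rintro ⟨r, hr, y, hy, rfl⟩
      have hy' : ∀ ℓ ∈ L, 0 ≤ ℓ y := by rw [hL] at hy; exact hy
      rintro ℓ ((⟨hℓL, hv0⟩ | ⟨hℓL, hvpos⟩) | ⟨p, ⟨⟨h1L, h2L⟩, hp1, hp2⟩, rfl⟩)
      · simp only [map_add, map_smul, smul_eq_mul, hv0, mul_zero, add_zero]
        exact hy' ℓ hℓL
      · simp only [map_add, map_smul, smul_eq_mul]
        exact add_nonneg (hy' ℓ hℓL) (mul_nonneg hr hvpos.le)
      · rw [papp]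
        simp only [map_add, map_smul, smul_eq_mul]
        have h1y := hy' p.1 h1L
        have h2y := hy' p.2 h2L
        nlinarith [mul_nonneg hp1.le h2y, mul_nonneg (neg_nonneg.mpr hp2.le) h1y]
    · intro hx
      have h0 : ∀ ℓ ∈ L, ℓ v = 0 → 0 ≤ ℓ x := fun ℓ h h' => hx ℓ (Or.inl (Or.inl ⟨h, h'⟩))
      have hpos : ∀ ℓ ∈ L, 0 < ℓ v → 0 ≤ ℓ x := fun ℓ h h' => hx ℓ (Or.inl (Or.inr ⟨h, h'⟩))
      have hpair : ∀ ℓ₁ ∈ L, ∀ ℓ₂ ∈ L, 0 < ℓ₁ v → ℓ₂ v < 0 →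
          0 ≤ ℓ₁ v * ℓ₂ x - ℓ₂ v * ℓ₁ x := by
        intro ℓ₁ h1 ℓ₂ h2 hp1 hp2
        have := hx (ℓ₁ v • ℓ₂ - ℓ₂ v • ℓ₁) (Or.inr ⟨(ℓ₁, ℓ₂), ⟨⟨h1, h2⟩, hp1, hp2⟩, rfl⟩)
        rwa [papp] at this
      -- construct the coefficient r
      suffices hsuff : ∃ r : ℚ, 0 ≤ r ∧ ∀ ℓ ∈ L, 0 ≤ ℓ x - r * ℓ v by
        obtain ⟨r, hr, key⟩ := hsuff
        refine ⟨r, hr, x - r • v, ?_, (sub_add_cancel x (r • v)).symm⟩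
        rw [hL]
        intro ℓ hℓ
        have := key ℓ hℓ
        simpa [map_sub, map_smul, smul_eq_mul] using this
      by_cases hP : (L.filter fun ℓ => 0 < ℓ v).Nonempty
      · set P := L.filter fun ℓ => 0 < ℓ v with hPdef
        have htne : (P.image fun ℓ => ℓ x / ℓ v).Nonempty := hP.image _
        set r := (P.image fun ℓ => ℓ x / ℓ v).min' htne with hrdef
        obtain ⟨ℓ₁, hℓ₁P, hℓ₁⟩ := Finset.mem_image.mp ((P.image fun ℓ => ℓ x / ℓ v).min'_mem htne)
        rw [← hrdef] at hℓ₁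
        obtain ⟨hℓ₁L, hℓ₁v⟩ := Finset.mem_filter.mp hℓ₁P
        have hr2 : r * ℓ₁ v = ℓ₁ x := by
          rw [← hℓ₁]; field_simp
        refine ⟨r, ?_, ?_⟩
        · rw [← hℓ₁]
          exact div_nonneg (hpos ℓ₁ hℓ₁L hℓ₁v) hℓ₁v.le
        · intro ℓ hℓ
          rcases lt_trichotomy (ℓ v) 0 with hneg | h0' | hpos'
          · have hp := hpair ℓ₁ hℓ₁L ℓ hℓ hℓ₁v hneg
            have h3 : 0 ≤ ℓ₁ v * (ℓ x - r * ℓ v) := by nlinarith [hp, hr2]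
            exact (mul_nonneg_iff_of_pos_left hℓ₁v).mp h3
          · simp only [h0', mul_zero, sub_zero]
            exact h0 ℓ hℓ h0'
          · have hmem : ℓ x / ℓ v ∈ P.image fun ℓ => ℓ x / ℓ v :=
              Finset.mem_image_of_mem _ (Finset.mem_filter.mpr ⟨hℓ, hpos'⟩)
            have := Finset.min'_le _ _ hmem
            rw [← hrdef] at this
            have := (le_div_iff₀ hpos').mp this
            linarith
      · set Nn := L.filter fun ℓ => ℓ v < 0 with hNdef
        by_cases hN : Nn.Nonempty
        · set r := max 0 ((Nn.image fun ℓ => ℓ x / ℓ v).max' (hN.image _)) with hrdef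
          refine ⟨r, le_max_left _ _, ?_⟩
          intro ℓ hℓ
          rcases lt_trichotomy (ℓ v) 0 with hneg | h0' | hpos'
          · have hmem : ℓ x / ℓ v ∈ Nn.image fun ℓ => ℓ x / ℓ v :=
              Finset.mem_image_of_mem _ (Finset.mem_filter.mpr ⟨hℓ, hneg⟩)
            have h4 : ℓ x / ℓ v ≤ r :=
              le_trans (Finset.le_max' _ _ hmem) (le_max_right _ _)
            have := (div_le_iff_of_neg hneg).mp h4
            linarith
          · simp only [h0', mul_zero, sub_zero]
            exact h0 ℓ hℓ h0'
          · exact absurd ⟨ℓ, Finset.mem_filter.mpr ⟨hℓ, hpos'⟩⟩ hP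
        · refine ⟨0, le_refl _, ?_⟩
          intro ℓ hℓ
          rcases lt_trichotomy (ℓ v) 0 with hneg | h0' | hpos'
          · exact absurd ⟨ℓ, Finset.mem_filter.mpr ⟨hℓ, hneg⟩⟩ hN
          · simp only [zero_mul, sub_zero]
            exact h0 ℓ hℓ h0'
          · exact absurd ⟨ℓ, Finset.mem_filter.mpr ⟨hℓ, hpos'⟩⟩ hP

/-- Every polyhedral cone has a halfspace representation. -/
theorem IsPolyCone.exists_dualRep {σ : Set (V n)} (h : IsPolyCone σ) :
    ∃ L : Finset (Module.Dual ℚ (V n)), σ = {x | ∀ ℓ ∈ L, 0 ≤ ℓ x} := by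
  obtain ⟨S, rfl⟩ := h
  exact ToricPaper.exists_dualRep S

end Weyl
section Closed
open Classical

variable {n : ℕ}

/-- Algebraic closedness: if `x + ε • w ∈ σ` for arbitrarily small `ε > 0`, then `x ∈ σ`. -/
lemma IsPolyCone.mem_of_small {σ : Set (V n)} (hσ : IsPolyCone σ) {x w : V n}
    (h : ∀ δ : ℚ, 0 < δ → ∃ ε : ℚ, 0 < ε ∧ ε ≤ δ ∧ x + ε • w ∈ σ) : x ∈ σ := by
  obtain ⟨L, hL⟩ := hσ.exists_dualRep
  rw [hL]
  intro ℓ hℓ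
  by_contra hneg
  push_neg at hneg
  obtain ⟨ε, hε, hεδ, hmem⟩ := h (-ℓ x / (2 * (|ℓ w| + 1)))
    (div_pos (by linarith) (by positivity))
  rw [hL] at hmem
  have h1 := hmem ℓ hℓ
  rw [map_add, map_smul, smul_eq_mul] at h1
  have habs : ℓ w ≤ |ℓ w| := le_abs_self _
  have h0 : (0:ℚ) ≤ |ℓ w| := abs_nonneg _
  have hm1 : ε * ℓ w ≤ ε * |ℓ w| := mul_le_mul_of_nonneg_left habs hε.le
  have hm2 : ε * (2 * (|ℓ w| + 1)) ≤ -ℓ x := (le_div_iff₀ (by positivity)).mp hεδ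
  nlinarith

/-- Recession: if `x + t • w ∈ σ` for arbitrarily large `t`, then `w ∈ σ`. -/
lemma IsPolyCone.mem_of_large {σ : Set (V n)} (hσ : IsPolyCone σ) {x w : V n}
    (h : ∀ M : ℚ, ∃ t : ℚ, M ≤ t ∧ x + t • w ∈ σ) : w ∈ σ := by
  obtain ⟨L, hL⟩ := hσ.exists_dualRep
  rw [hL]
  intro ℓ hℓ
  by_contra hneg
  push_neg at hneg
  obtain ⟨t, ht, hmem⟩ := h (ℓ x / (-ℓ w) + 1)
  rw [hL] at hmem
  have h1 := hmem ℓ hℓ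
  rw [map_add, map_smul, smul_eq_mul] at h1
  have hw : 0 < -ℓ w := by linarith
  have h2 : (ℓ x / (-ℓ w)) * (-ℓ w) = ℓ x := div_mul_cancel₀ _ (ne_of_gt hw)
  nlinarith

/-- Maximum of a rational "interval" given by finitely many affine conditions. -/
lemma exists_max_affine (P : Finset (ℚ × ℚ)) (t₀ : ℚ) (ht₀ : ∀ p ∈ P, 0 ≤ p.1 + t₀ * p.2)
    (M : ℚ) (hM : ∀ t : ℚ, (∀ p ∈ P, 0 ≤ p.1 + t * p.2) → t ≤ M) :
    ∃ u : ℚ, t₀ ≤ u ∧ (∀ p ∈ P, 0 ≤ p.1 + u * p.2) ∧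
      ∀ s : ℚ, (∀ p ∈ P, 0 ≤ p.1 + s * p.2) → s ≤ u := by
  classical
  set Nset := P.filter (fun p => p.2 < 0) with hNdef
  by_cases hN : Nset.Nonempty
  · set u := (Nset.image fun p => p.1 / (-p.2)).min' (hN.image _) with hudef
    have hub : ∀ s : ℚ, (∀ p ∈ P, 0 ≤ p.1 + s * p.2) → s ≤ u := by
      intro s hs
      refine Finset.le_min' _ _ _ ?_
      intro y hy
      obtain ⟨p, hp, rfl⟩ := Finset.mem_image.mp hy
      obtain ⟨hpP, hp2⟩ := Finset.mem_filter.mp hp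
      have := hs p hpP
      rw [le_div_iff₀ (by linarith : (0:ℚ) < -p.2)]
      nlinarith
    have ht₀u : t₀ ≤ u := hub t₀ ht₀
    refine ⟨u, ht₀u, ?_, hub⟩
    intro p hp
    by_cases hp2 : p.2 < 0
    · have hmem : p.1 / (-p.2) ∈ Nset.image fun p => p.1 / (-p.2) :=
        Finset.mem_image_of_mem _ (Finset.mem_filter.mpr ⟨hp, hp2⟩)
      have := Finset.min'_le _ _ hmem
      rw [← hudef] at this
      have h2 := (le_div_iff₀ (by linarith : (0:ℚ) < -p.2)).mp this
      nlinarith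
    · push_neg at hp2
      have := ht₀ p hp
      nlinarith
  · exfalso
    have hfeas : ∀ p ∈ P, 0 ≤ p.1 + max (M + 1) t₀ * p.2 := by
      intro p hp
      have hp2 : 0 ≤ p.2 := by
        by_contra hc
        exact hN ⟨p, Finset.mem_filter.mpr ⟨hp, by linarith⟩⟩
      have := ht₀ p hp
      have : t₀ ≤ max (M + 1) t₀ := le_max_right _ _
      nlinarith [ht₀ p hp, mul_le_mul_of_nonneg_right this hp2]
    have := hM _ hfeas
    have : M + 1 ≤ M := le_trans (le_max_left _ _) this
    linarith

/-- Line exit: leaving a polyhedral cone along a ray, one exits through a supporting wall. -/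
lemma IsPolyCone.exists_exit {σ : Set (V n)} (hσ : IsPolyCone σ) {x z : V n}
    (hx : x ∈ σ) (hz : z ∉ σ) :
    ∃ t : ℚ, 0 ≤ t ∧ x + t • z ∈ σ ∧ ∃ ℓ : Module.Dual ℚ (V n),
      (∀ y ∈ σ, 0 ≤ ℓ y) ∧ ℓ (x + t • z) = 0 ∧ ℓ z < 0 := by
  classical
  obtain ⟨L, hL⟩ := hσ.exists_dualRep
  have hmemiff : ∀ t : ℚ, (x + t • z ∈ σ) ↔ ∀ ℓ ∈ L, 0 ≤ ℓ x + t * ℓ z := by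
    intro t
    rw [hL]
    simp only [Set.mem_setOf_eq, map_add, map_smul, smul_eq_mul]
  -- boundedness
  obtain ⟨M, hM⟩ : ∃ M : ℚ, ∀ t : ℚ, 0 ≤ t → x + t • z ∈ σ → t ≤ M := by
    by_contra hc
    push_neg at hc
    refine hz (hσ.mem_of_large (w := z) (x := x) ?_)
    intro M'
    obtain ⟨t, ht0, htσ, hMt⟩ := hc (max M' 0)
    exact ⟨t, le_trans (le_max_left _ _) hMt.le, htσ⟩
  set P : Finset (ℚ × ℚ) := insert (0, 1) (L.image fun ℓ => (ℓ x, ℓ z)) with hPdef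
  have hfeas_iff : ∀ t : ℚ, (∀ p ∈ P, 0 ≤ p.1 + t * p.2) ↔ (0 ≤ t ∧ x + t • z ∈ σ) := by
    intro t
    rw [hmemiff]
    constructor
    · intro h
      refine ⟨by simpa using h (0, 1) (Finset.mem_insert_self _ _), ?_⟩
      intro ℓ hℓ
      exact h (ℓ x, ℓ z) (Finset.mem_insert_of_mem (Finset.mem_image_of_mem _ hℓ))
    · rintro ⟨ht, h⟩ p hp
      rcases Finset.mem_insert.mp hp with rfl | hp
      · simpa using ht
      · obtain ⟨ℓ, hℓ, rfl⟩ := Finset.mem_image.mp hp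
        exact h ℓ hℓ
    
  obtain ⟨u, hu0, hufeas, humax⟩ := exists_max_affine P 0
    (by rw [hfeas_iff]; exact ⟨le_refl _, by simpa using hx⟩) M
    (fun t ht => by rw [hfeas_iff] at ht; exact hM t ht.1 ht.2)
  obtain ⟨hut, huσ⟩ := (hfeas_iff u).mp hufeas
  -- find the wall
  have hwall : ∃ p ∈ P, p.1 + u * p.2 = 0 ∧ p.2 < 0 := by
    by_contra hc
    push_neg at hc
    have hPne : P.Nonempty := ⟨(0, 1), Finset.mem_insert_self _ _⟩
    set δ := (P.image fun p => if p.2 < 0 then (p.1 + u * p.2) / (-p.2) else 1).min'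
      (hPne.image _) with hδdef
    have hδpos : 0 < δ := by
      rw [hδdef, Finset.lt_min'_iff]
      intro y hy
      obtain ⟨p, hp, rfl⟩ := Finset.mem_image.mp hy
      split_ifs with h2
      · have h3 := hufeas p hp
        have h4 : p.1 + u * p.2 ≠ 0 := fun h => by have h6 := hc p hp h; linarith
        have h5 : 0 < p.1 + u * p.2 := lt_of_le_of_ne h3 (Ne.symm h4)
        exact div_pos h5 (by linarith)
      · exact zero_lt_one
    have hfeas' : ∀ p ∈ P, 0 ≤ p.1 + (u + δ) * p.2 := by
      intro p hp
      by_cases h2 : p.2 < 0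
      · have hδle : δ ≤ (p.1 + u * p.2) / (-p.2) := by
          have : (if p.2 < 0 then (p.1 + u * p.2) / (-p.2) else 1) ∈
              P.image fun p => if p.2 < 0 then (p.1 + u * p.2) / (-p.2) else 1 :=
            Finset.mem_image_of_mem _ hp
          rw [if_pos h2] at this
          exact le_trans (by rw [hδdef]) (Finset.min'_le _ _ this)
      
        have := (le_div_iff₀ (by linarith : (0:ℚ) < -p.2)).mp hδle
        nlinarith
      · push_neg at h2
        have := hufeas p hp
        nlinarith
    have := humax _ hfeas'
    linarith
  obtain ⟨p, hpP, hpeq, hpneg⟩ := hwall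
  rcases Finset.mem_insert.mp hpP with rfl | hp
  · norm_num at hpneg
  · obtain ⟨ℓ, hℓL, rfl⟩ := Finset.mem_image.mp hp
    refine ⟨u, hut, huσ, ℓ, ?_, ?_, hpneg⟩
    · intro y hy
      rw [hL] at hy
      exact hy ℓ hℓL
    · rw [map_add, map_smul, smul_eq_mul]
      exact hpeq

end Closed
section Faces
open Classical

variable {n : ℕ}

lemma map_combo (m : Module.Dual ℚ (V n)) (t : Finset (V n)) (c : V n → ℚ) :
    m (∑ v ∈ t, c v • v) = ∑ v ∈ t, c v * m v := by
  rw [map_sum]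
  exact Finset.sum_congr rfl fun v _ => by rw [map_smul, smul_eq_mul]

lemma IsFaceOf.subset {F σ : Set (V n)} (h : IsFaceOf F σ) : F ⊆ σ := by
  obtain ⟨m, _, rfl⟩ := h
  exact Set.sep_subset _ _

lemma isFaceOf_self (σ : Set (V n)) : IsFaceOf σ σ :=
  ⟨0, fun x _ => le_refl _, by simp⟩

lemma IsFaceOf.congr {F F' σ : Set (V n)} (h : IsFaceOf F σ) (he : F = F') : IsFaceOf F' σ :=
  he ▸ h

lemma IsFaceOf.inter {F G σ : Set (V n)} (hF : IsFaceOf F σ) (hG : IsFaceOf G σ) :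
    IsFaceOf (F ∩ G) σ := by
  obtain ⟨m₁, hm₁, rfl⟩ := hF
  obtain ⟨m₂, hm₂, rfl⟩ := hG
  refine ⟨m₁ + m₂, fun x hx => add_nonneg (hm₁ x hx) (hm₂ x hx), ?_⟩
  ext x
  simp only [Set.mem_inter_iff, Set.mem_setOf_eq, LinearMap.add_apply]
  constructor
  · rintro ⟨⟨hx, h1⟩, ⟨_, h2⟩⟩
    exact ⟨hx, by rw [h1, h2, add_zero]⟩
  · rintro ⟨hx, h12⟩
    have h1 := hm₁ x hx
    have h2 := hm₂ x hx
    exact ⟨⟨hx, by linarith⟩, ⟨hx, by linarith⟩⟩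

/-- A face of a finitely generated cone is generated by the generators it contains. -/
lemma face_eq_coneHull {S : Finset (V n)} {m : Module.Dual ℚ (V n)}
    (hm : ∀ x ∈ coneHull (S : Set (V n)), 0 ≤ m x) :
    {x ∈ coneHull (S : Set (V n)) | m x = 0} =
      coneHull ((S : Set (V n)) ∩ {v | m v = 0}) := by
  ext x
  constructor
  · rintro ⟨⟨t, ht, c, hc, rfl⟩, hx0⟩
    rw [map_combo] at hx0
    have hterm : ∀ v ∈ t, c v * m v = 0 :=
      (Finset.sum_eq_zero_iff_of_nonneg (fun v hv =>
        mul_nonneg (hc v hv) (hm v (subset_coneHull _ (ht hv))))).mp hx0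
    refine ⟨t.filter (fun v => m v = 0), ?_, c, fun v hv => hc v (Finset.mem_of_mem_filter _ hv), ?_⟩
    · intro v hv
      rw [Finset.coe_filter] at hv
      exact ⟨ht hv.1, hv.2⟩
    · rw [Finset.sum_filter]
      refine Finset.sum_congr rfl fun v hv => ?_
      split_ifs with h
      · rfl
      · rcases mul_eq_zero.mp (hterm v hv) with h' | h'
        · rw [h', zero_smul]
        · exact absurd h' h
  · rintro ⟨t, ht, c, hc, rfl⟩
    have hsub : (↑t : Set (V n)) ⊆ (S : Set (V n)) := fun v hv => (ht hv).1
    refine ⟨⟨t, hsub, c, hc, rfl⟩, ?_⟩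
    rw [map_combo]
    exact Finset.sum_eq_zero fun v hv => by rw [(ht hv).2, mul_zero]

lemma IsFaceOf.isPolyCone {F σ : Set (V n)} (hF : IsFaceOf F σ) (hσ : IsPolyCone σ) :
    IsPolyCone F := by
  obtain ⟨S, rfl⟩ := hσ
  obtain ⟨m, hm, rfl⟩ := hF
  refine ⟨S.filter (fun v => m v = 0), ?_⟩
  rw [face_eq_coneHull hm, Finset.coe_filter]
  congr 1

lemma faces_finite {σ : Set (V n)} (hσ : IsPolyCone σ) : (faces σ).Finite := by
  obtain ⟨S, rfl⟩ := hσ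
  have himg : ((fun t : Finset (V n) => coneHull (↑t : Set (V n))) '' ↑S.powerset).Finite :=
    S.powerset.finite_toSet.image _
  refine himg.subset ?_
  rintro F ⟨m, hm, rfl⟩
  refine ⟨S.filter (fun v => m v = 0),
    Finset.mem_coe.mpr (Finset.mem_powerset.mpr (Finset.filter_subset _ _)), ?_⟩
  show coneHull (↑(S.filter fun v => m v = 0) : Set (V n)) =
    {x ∈ coneHull (S : Set (V n)) | m x = 0}
  rw [face_eq_coneHull hm, Finset.coe_filter]
  congr 1

/-- Transitivity: a face of a face is a face (for polyhedral cones). -/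
lemma IsFaceOf.trans {G F σ : Set (V n)} (hGF : IsFaceOf G F) (hFσ : IsFaceOf F σ)
    (hσ : IsPolyCone σ) : IsFaceOf G σ := by
  obtain ⟨S, rfl⟩ := hσ
  obtain ⟨m₁, hm₁, hF⟩ := hFσ
  obtain ⟨m₂, hm₂, hG⟩ := hGF
  have hSσ : (S : Set (V n)) ⊆ coneHull (S : Set (V n)) := subset_coneHull _
  set Q := (S.filter fun v => m₁ v ≠ 0).image (fun v => -m₂ v / m₁ v) with hQdef
  set N := (if h : Q.Nonempty then max 0 (Q.max' h) + 1 else 1 : ℚ) with hNdef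
  have hNup : ∀ v ∈ S, m₁ v ≠ 0 → -m₂ v / m₁ v < N := by
    intro v hv hne
    have hQmem : -m₂ v / m₁ v ∈ Q := by
      rw [hQdef]
      exact Finset.mem_image_of_mem _ (Finset.mem_filter.mpr ⟨hv, hne⟩)
    have hQne : Q.Nonempty := ⟨_, hQmem⟩
    have h1 : -m₂ v / m₁ v ≤ Q.max' hQne := Finset.le_max' Q _ hQmem
    rw [hNdef, dif_pos hQne]
    have := le_max_right (0:ℚ) (Q.max' hQne)
    linarith
  set m' := m₂ + N • m₁ with hm'def
  have key : ∀ v ∈ S, 0 ≤ m' v ∧ (m' v = 0 → m₁ v = 0 ∧ m₂ v = 0) := by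
    intro v hv
    have hm₁v : 0 ≤ m₁ v := hm₁ v (hSσ hv)
    by_cases hz : m₁ v = 0
    · have hvF : v ∈ F := by rw [hF]; exact ⟨hSσ hv, hz⟩
      have h2 : 0 ≤ m₂ v := hm₂ v hvF
      have hm'v : m' v = m₂ v := by
        simp [hm'def, hz]
      rw [hm'v]
      exact ⟨h2, fun h => ⟨hz, h⟩⟩
    · have hpos : 0 < m₁ v := lt_of_le_of_ne hm₁v (Ne.symm hz)
      have := hNup v hv hz
      have h3 : -m₂ v < N * m₁ v := by
        rw [div_lt_iff₀ hpos] at this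
        linarith
      constructor
      · simp only [hm'def, LinearMap.add_apply, LinearMap.smul_apply, smul_eq_mul]
        linarith
      · intro h
        exfalso
        simp only [hm'def, LinearMap.add_apply, LinearMap.smul_apply, smul_eq_mul] at h
        linarith
  refine ⟨m', ?_, ?_⟩
  · rintro x ⟨t, ht, c, hc, rfl⟩
    rw [map_combo]
    exact Finset.sum_nonneg fun v hv =>
      mul_nonneg (hc v hv) (key v (ht hv)).1
  · rw [hG, hF]
    ext x
    simp only [Set.mem_setOf_eq]
    constructor
    · rintro ⟨⟨hxσ, h1⟩, h2⟩
      refine ⟨hxσ, ?_⟩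
      simp only [hm'def, LinearMap.add_apply, LinearMap.smul_apply, smul_eq_mul, h1, h2,
        mul_zero, add_zero]
    · rintro ⟨hxσ, hx0⟩
      obtain ⟨t, ht, c, hc, rfl⟩ := hxσ
      rw [map_combo] at hx0
      have hterm : ∀ v ∈ t, c v * m' v = 0 :=
        (Finset.sum_eq_zero_iff_of_nonneg (fun v hv =>
          mul_nonneg (hc v hv) (key v (ht hv)).1)).mp hx0
      have hvanish : ∀ (m'' : Module.Dual ℚ (V n)), (∀ v ∈ t, m' v = 0 → m'' v = 0) →
          m'' (∑ v ∈ t, c v • v) = 0 := by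
        intro m'' hm''
        rw [map_combo]
        refine Finset.sum_eq_zero fun v hv => ?_
        rcases mul_eq_zero.mp (hterm v hv) with h' | h'
        · rw [h', zero_mul]
        · rw [hm'' v hv h', mul_zero]
      have h1 : m₁ (∑ v ∈ t, c v • v) = 0 :=
        hvanish m₁ fun v hv h => ((key v (ht hv)).2 h).1
      have h2 : m₂ (∑ v ∈ t, c v • v) = 0 :=
        hvanish m₂ fun v hv h => ((key v (ht hv)).2 h).2
      exact ⟨⟨⟨t, ht, c, hc, rfl⟩, h1⟩, h2⟩

/-- A face of `σ` cut to a subcone of `σ` is a face of the subcone. -/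
lemma IsFaceOf.inter_subcone {F σ σ' : Set (V n)} (hF : IsFaceOf F σ) (hsub : σ' ⊆ σ) :
    IsFaceOf (F ∩ σ') σ' := by
  obtain ⟨m, hm, rfl⟩ := hF
  refine ⟨m, fun x hx => hm x (hsub hx), ?_⟩
  ext x
  constructor
  · rintro ⟨⟨_, h1⟩, h2⟩
    exact ⟨h2, h1⟩
  · rintro ⟨h1, h2⟩
    exact ⟨⟨hsub h1, h2⟩, h1⟩

/-- A face of `σ` contained in an intermediate cone is a face of it. -/
lemma IsFaceOf.restrict {F G σ : Set (V n)} (hF : IsFaceOf F σ) (hFG : F ⊆ G) (hGσ : G ⊆ σ) :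
    IsFaceOf F G := by
  obtain ⟨m, hm, rfl⟩ := hF
  refine ⟨m, fun x hx => hm x (hGσ hx), ?_⟩
  ext x
  exact ⟨fun h => ⟨hFG h, h.2⟩, fun ⟨h1, h2⟩ => ⟨hGσ h1, h2⟩⟩

lemma inter_sInter_faces {σ : Set (V n)} (𝒢 : Set (Set (V n))) (hfin : 𝒢.Finite)
    (h : ∀ G ∈ 𝒢, IsFaceOf G σ) : IsFaceOf (σ ∩ ⋂₀ 𝒢) σ := by
  revert h
  refine Set.Finite.induction_on
    (motive := fun 𝒢 _ => (∀ G ∈ 𝒢, IsFaceOf G σ) → IsFaceOf (σ ∩ ⋂₀ 𝒢) σ) 𝒢 hfin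
    (fun _ => (isFaceOf_self σ).congr (by simp)) ?_
  intro G 𝒢' hG h𝒢' ih h
  have h1 : IsFaceOf G σ := h G (Set.mem_insert _ _)
  have h2 := ih (fun G' hG' => h G' (Set.mem_insert_of_mem _ hG'))
  refine (h1.inter h2).congr ?_
  rw [Set.sInter_insert]
  ext x
  simp only [Set.mem_inter_iff, Set.mem_sInter]
  tauto

/-- Existence of the minimal face containing a given subset. -/
lemma exists_min_face {σ : Set (V n)} (hσ : IsPolyCone σ) {s : Set (V n)} (hs : s ⊆ σ) :
    ∃ F, IsFaceOf F σ ∧ s ⊆ F ∧ ∀ G, IsFaceOf G σ → s ⊆ G → F ⊆ G := by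
  set 𝒢 := {G | IsFaceOf G σ ∧ s ⊆ G} with h𝒢def
  have hfin : 𝒢.Finite := (faces_finite hσ).subset (fun G hG => hG.1)
  refine ⟨σ ∩ ⋂₀ 𝒢, inter_sInter_faces 𝒢 hfin (fun G hG => hG.1), ?_, ?_⟩
  · exact Set.subset_inter hs (Set.subset_sInter fun G hG => hG.2)
  · intro G hG hsG
    exact (Set.inter_subset_right).trans (Set.sInter_subset_of_mem ⟨hG, hsG⟩)

lemma coneDim_mono {A B : Set (V n)} (h : A ⊆ B) : coneDim A ≤ coneDim B :=
  Submodule.finrank_mono (Submodule.span_mono h)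

lemma coneDim_le_top (σ : Set (V n)) : coneDim σ ≤ n := by
  have := Submodule.finrank_le (Submodule.span ℚ σ)
  simpa [coneDim] using this

lemma coneDim_lt_of_notin_span {A B : Set (V n)} (h : A ⊆ B) {p : V n} (hp : p ∈ B)
    (hps : p ∉ Submodule.span ℚ A) : coneDim A < coneDim B := by
  apply Submodule.finrank_lt_finrank_of_lt
  exact lt_of_le_of_ne (Submodule.span_mono h)
    (fun he => hps (he ▸ Submodule.subset_span hp))

end Faces
section Rays
open Classical

variable {n : ℕ}

lemma StronglyConvex.mono {σ τ : Set (V n)} (h : StronglyConvex σ) (hsub : τ ⊆ σ) :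
    StronglyConvex τ := fun x hx hnx => h x (hsub hx) (hsub hnx)

lemma IsPolyCone.smul_mem {σ : Set (V n)} (hσ : IsPolyCone σ) {x : V n} {r : ℚ}
    (hx : x ∈ σ) (hr : 0 ≤ r) : r • x ∈ σ := by
  obtain ⟨S, rfl⟩ := hσ
  exact smul_mem_coneHull hx hr

lemma IsPolyCone.add_mem {σ : Set (V n)} (hσ : IsPolyCone σ) {x y : V n}
    (hx : x ∈ σ) (hy : y ∈ σ) : x + y ∈ σ := by
  obtain ⟨S, rfl⟩ := hσ
  exact add_mem_coneHull hx hy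

lemma IsPolyCone.zero_mem {σ : Set (V n)} (hσ : IsPolyCone σ) : (0 : V n) ∈ σ := by
  obtain ⟨S, rfl⟩ := hσ
  exact zero_mem_coneHull _

lemma exists_mem_ne_zero_of_coneDim_pos {σ : Set (V n)} (h : 1 ≤ coneDim σ) :
    ∃ x ∈ σ, x ≠ 0 := by
  by_contra hc
  push_neg at hc
  have hsub : σ ⊆ (↑(⊥ : Submodule ℚ (V n)) : Set (V n)) := by
    intro x hx
    simp [hc x hx]
  have hle : Submodule.span ℚ σ ≤ ⊥ := Submodule.span_le.mpr hsub
  have : coneDim σ ≤ Module.finrank ℚ (⊥ : Submodule ℚ (V n)) := Submodule.finrank_mono hle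
  rw [finrank_bot] at this
  omega

/-- Structure of rays: a ray is the set of nonnegative multiples of any nonzero element. -/
lemma IsRayOf.eq_smul_set {σ ν : Set (V n)} (hσ : IsPolyCone σ) (hsc : StronglyConvex σ)
    (hν : IsRayOf ν σ) {x : V n} (hx : x ∈ ν) (hx0 : x ≠ 0) :
    ν = {y | ∃ c : ℚ, 0 ≤ c ∧ y = c • x} := by
  have hνpoly : IsPolyCone ν := hν.1.isPolyCone hσ
  have hsub : ν ⊆ σ := hν.1.subset
  have hle : Submodule.span ℚ {x} ≤ Submodule.span ℚ ν :=
    Submodule.span_mono (Set.singleton_subset_iff.mpr hx)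
  have heq : Submodule.span ℚ {x} = Submodule.span ℚ ν := by
    apply Submodule.eq_of_le_of_finrank_le hle
    rw [finrank_span_singleton hx0]
    exact le_of_eq hν.2
  ext y
  constructor
  · intro hy
    have hy' : y ∈ Submodule.span ℚ {x} := heq ▸ Submodule.subset_span hy
    obtain ⟨c, hc⟩ := Submodule.mem_span_singleton.mp hy'
    rcases le_or_gt 0 c with h | h
    · exact ⟨c, h, hc.symm⟩
    · exfalso
      have hnx : -x = (-c⁻¹) • y := by
        rw [← hc, smul_smul]
        rw [show -c⁻¹ * c = -1 by rw [neg_mul, inv_mul_cancel₀ (ne_of_lt h)]]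
        module
      have hmem : -x ∈ ν := by
        rw [hnx]
        exact hνpoly.smul_mem hy (le_of_lt (neg_pos.mpr (inv_lt_zero.mpr h)))
      exact hx0 (hsc x (hsub hx) (hsub hmem))
  · rintro ⟨c, hc, rfl⟩
    exact hνpoly.smul_mem hx hc

lemma IsRayOf.exists_ne_zero {σ ν : Set (V n)} (hν : IsRayOf ν σ) : ∃ x ∈ ν, x ≠ 0 :=
  exists_mem_ne_zero_of_coneDim_pos (le_of_eq hν.2.symm)

/-- Any polyhedral cone containing a nonzero element of a ray contains the whole ray. -/
lemma IsRayOf.subset_of_mem {σ ν σ' : Set (V n)} (hσ : IsPolyCone σ) (hsc : StronglyConvex σ)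
    (hν : IsRayOf ν σ) {x : V n} (hx : x ∈ ν) (hx0 : x ≠ 0)
    (hσ' : IsPolyCone σ') (hxσ' : x ∈ σ') : ν ⊆ σ' := by
  rw [hν.eq_smul_set hσ hsc hx hx0]
  rintro y ⟨c, hc, rfl⟩
  exact hσ'.smul_mem hxσ' hc

/-- The only ray of a ray is itself. -/
lemma IsRayOf.ray_eq_self {σ ν β : Set (V n)} (hσ : IsPolyCone σ) (hsc : StronglyConvex σ)
    (hν : IsRayOf ν σ) (hβ : IsRayOf β ν) : β = ν := by
  obtain ⟨x, hxβ, hx0⟩ := hβ.exists_ne_zero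
  have hxν : x ∈ ν := hβ.1.subset hxβ
  have hstr := hν.eq_smul_set hσ hsc hxν hx0
  obtain ⟨m, hm, hβeq⟩ := hβ.1
  refine Set.Subset.antisymm hβ.1.subset ?_
  intro y hy
  have hmx : m x = 0 := by
    rw [hβeq] at hxβ
    exact hxβ.2
  rw [hstr] at hy
  obtain ⟨c, hc, rfl⟩ := hy
  rw [hβeq]
  refine ⟨by rw [hstr]; exact ⟨c, hc, rfl⟩, ?_⟩
  rw [map_smul, smul_eq_mul, hmx, mul_zero]

end Rays
section Minkowski
open Classical

variable {n : ℕ}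

lemma raysOf_subset_raysOf {F σ : Set (V n)} (hF : IsFaceOf F σ) (hσ : IsPolyCone σ) :
    raysOf F ⊆ raysOf σ := by
  rintro ν ⟨hface, hdim⟩
  exact ⟨hface.trans hF hσ, hdim⟩

lemma subset_span_rays_aux : ∀ (d : ℕ) (σ : Set (V n)), IsPolyCone σ → StronglyConvex σ →
    coneDim σ ≤ d → σ ⊆ (Submodule.span ℚ (⋃₀ raysOf σ) : Submodule ℚ (V n)) := by
  intro d
  induction d with
  | zero =>
    intro σ hσ hsc hdim x hx
    have hbot : Submodule.span ℚ σ = ⊥ := Submodule.finrank_eq_zero.mp (Nat.le_zero.mp hdim)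
    have : x ∈ Submodule.span ℚ σ := Submodule.subset_span hx
    rw [hbot] at this
    rw [Submodule.mem_bot] at this
    rw [this]
    exact Submodule.zero_mem _
  | succ d ih =>
    intro σ hσ hsc hdim x hx
    by_cases hled : coneDim σ ≤ d
    · exact ih σ hσ hsc hled hx
    have hdeq : coneDim σ = d + 1 := le_antisymm hdim (by omega)
    by_cases hx0 : x = 0
    · rw [hx0]; exact Submodule.zero_mem _
    by_cases hone : coneDim σ = 1
    · exact Submodule.subset_span ⟨σ, ⟨isFaceOf_self σ, hone⟩, hx⟩
    -- now dim σ = d+1 ≥ 2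
    have hnottriv : ¬ σ ⊆ (Submodule.span ℚ {x} : Submodule ℚ (V n)) := by
      intro hss
      have h1 : Submodule.span ℚ σ ≤ Submodule.span ℚ {x} := Submodule.span_le.mpr hss
      have h2 : coneDim σ ≤ Module.finrank ℚ (Submodule.span ℚ ({x} : Set (V n))) :=
        Submodule.finrank_mono h1
      rw [finrank_span_singleton hx0] at h2
      omega
    obtain ⟨v, hvσ, hv⟩ := Set.not_subset.mp hnottriv
    have hv0 : v ≠ 0 := fun h => hv (h ▸ Submodule.zero_mem _)
    have hnegv : -v ∉ σ := fun h => hv0 (hsc v hvσ h)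
    have hnegx : -x ∉ σ := fun h => hx0 (hsc x hx h)
    -- exit from x in direction -v
    obtain ⟨t, ht0, hyσ, ℓ, hℓσ, hℓy, hℓz⟩ := hσ.exists_exit hx hnegv
    -- exit from v in direction -x
    obtain ⟨t', ht'0, hy'σ, ℓ', hℓ'σ, hℓ'y, hℓ'z⟩ := hσ.exists_exit hvσ hnegx
    have hℓv : 0 < ℓ v := by rw [map_neg] at hℓz; linarith
    have hℓ'x : 0 < ℓ' x := by rw [map_neg] at hℓ'z; linarith
    set y := x + t • (-v) with hydef
    set y' := v + t' • (-x) with hy'def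
    set W := Submodule.span ℚ (⋃₀ raysOf σ) with hWdef
    have hWface : ∀ (m : Module.Dual ℚ (V n)), (∀ z ∈ σ, 0 ≤ m z) →
        ∀ w ∈ σ, m w = 0 → (0 < m v ∨ 0 < m x) → w ∈ W := by
      intro m hm w hwσ hw0 hmv
      set F := {z ∈ σ | m z = 0} with hFdef
      have hFface : IsFaceOf F σ := ⟨m, hm, rfl⟩
      have hFpoly : IsPolyCone F := hFface.isPolyCone hσ
      have hFsc : StronglyConvex F := hsc.mono hFface.subset
      have hkerF : Submodule.span ℚ F ≤ LinearMap.ker m :=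
        Submodule.span_le.mpr (fun z hz => LinearMap.mem_ker.mpr hz.2)
      have hFdim : coneDim F ≤ d := by
        have hlt : coneDim F < coneDim σ := by
          rcases hmv with hpos | hpos
          · refine coneDim_lt_of_notin_span hFface.subset hvσ (fun hmem => ?_)
            have := hkerF hmem
            rw [LinearMap.mem_ker] at this
            linarith
          · refine coneDim_lt_of_notin_span hFface.subset hx (fun hmem => ?_)
            have := hkerF hmem
            rw [LinearMap.mem_ker] at this
            linarith
        omega
      have hwF : w ∈ F := ⟨hwσ, hw0⟩
      have := ih F hFpoly hFsc hFdim hwF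
      refine Submodule.span_mono ?_ this
      intro z hz
      obtain ⟨ν, hν, hzν⟩ := hz
      exact ⟨ν, raysOf_subset_raysOf hFface hσ hν, hzν⟩
    have hyW : y ∈ W := hWface ℓ hℓσ y hyσ hℓy (Or.inl hℓv)
    have hy'W : y' ∈ W := hWface ℓ' hℓ'σ y' hy'σ hℓ'y (Or.inr hℓ'x)
    by_cases hcase : t * t' = 1
    · exfalso
      have hsum : y + t • y' = 0 := by
        rw [hydef, hy'def]
        have : t * t' = 1 := hcase
        rw [smul_add, smul_smul, smul_neg, this]
        module
      have hty' : t • y' ∈ σ := hσ.smul_mem hy'σ ht0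
      have hnegy : -y ∈ σ := by
        have h' : -y = t • y' := neg_eq_of_add_eq_zero_right hsum
        rw [h']; exact hty'
      have hy0 : y = 0 := hsc y hyσ hnegy
      have hxtv : x = t • v := by
        have : y = x - t • v := by rw [hydef]; module
        rw [this] at hy0
        have := sub_eq_zero.mp hy0
        exact this
      have ht0' : t ≠ 0 := fun h => by rw [h, zero_mul] at hcase; norm_num at hcase
      apply hv
      show v ∈ Submodule.span ℚ {x}
      rw [Submodule.mem_span_singleton]
      exact ⟨t⁻¹, by rw [hxtv, smul_smul, inv_mul_cancel₀ ht0', one_smul]⟩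
    · have hkey : (1 - t * t') • x = y + t • y' := by
        rw [hydef, hy'def]
        rw [smul_add, smul_smul, smul_neg, smul_neg]
        module
      have hx_eq : x = (1 - t * t')⁻¹ • (y + t • y') := by
        rw [← hkey, smul_smul, inv_mul_cancel₀
          (fun h => hcase (sub_eq_zero.mp h).symm), one_smul]
      have hxW : x ∈ W := by
        rw [hx_eq]
        exact Submodule.smul_mem _ _ (Submodule.add_mem _ hyW (Submodule.smul_mem _ _ hy'W))
      exact hxW

/-- Minkowski: a strongly convex polyhedral cone lies in the span of its rays. -/
theorem subset_span_rays {σ : Set (V n)} (hσ : IsPolyCone σ) (hsc : StronglyConvex σ) :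
    σ ⊆ (Submodule.span ℚ (⋃₀ raysOf σ) : Submodule ℚ (V n)) :=
  subset_span_rays_aux (coneDim σ) σ hσ hsc le_rfl

end Minkowski
section Purity
open Classical

variable {n : ℕ}

lemma support_faces {τ : Set (V n)} (hτ : IsPolyCone τ) : support (faces τ) = τ := by
  apply Set.Subset.antisymm
  · exact Set.sUnion_subset (fun F hF => hF.subset)
  · exact Set.subset_sUnion_of_mem (isFaceOf_self τ)

/-- Dimension bump: a non-full-dimensional cone of a fan subdividing a full-dimensional
cone `τ` is properly contained in a bigger cone of the fan. -/
lemma dim_bump {X' : Set (Set (V n))} (hfan : IsFan X') {τ : Set (V n)} (hτ : IsPolyCone τ)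
    (hsupp : support X' = τ) (hfull : Submodule.span ℚ τ = ⊤)
    {σ : Set (V n)} (hσX : σ ∈ X') (hlt : coneDim σ < n) :
    ∃ σ'' ∈ X', σ ⊆ σ'' ∧ coneDim σ < coneDim σ'' := by
  have hσsub : σ ⊆ τ := hsupp ▸ Set.subset_sUnion_of_mem hσX
  obtain ⟨Sσ, hSσ⟩ := (hfan.2.1 σ hσX).1
  set y := ∑ v ∈ Sσ, (1 : ℚ) • v with hydef
  have hyσ : y ∈ σ := by
    rw [hSσ]
    exact ⟨Sσ, le_refl _, fun _ => 1, fun _ _ => zero_le_one, rfl⟩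
  -- interior point property
  have hint : ∀ F, IsFaceOf F σ → y ∈ F → σ ⊆ F := by
    rintro F ⟨m, hm, rfl⟩ hyF
    have hterm : ∀ v ∈ Sσ, (1:ℚ) * m v = 0 := by
      apply (Finset.sum_eq_zero_iff_of_nonneg (fun v hv => ?_)).mp
      · rw [← map_combo]
        exact hyF.2
      · exact mul_nonneg zero_le_one (hm v (hSσ ▸ subset_coneHull _ hv))
    intro z hz
    refine ⟨hz, ?_⟩
    rw [hSσ] at hz
    obtain ⟨t, ht, c, hc, rfl⟩ := hz
    rw [map_combo]
    refine Finset.sum_eq_zero fun v hv => ?_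
    have := hterm v (ht hv)
    rw [one_mul] at this
    rw [this, mul_zero]
  -- a vector of τ outside the span of σ
  obtain ⟨w, hwτ, hw⟩ : ∃ w ∈ τ, w ∉ Submodule.span ℚ σ := by
    by_contra hc
    push_neg at hc
    have h1 : Submodule.span ℚ τ ≤ Submodule.span ℚ σ := Submodule.span_le.mpr hc
    rw [hfull] at h1
    have h2 : coneDim σ = n := by
      have : (⊤ : Submodule ℚ (V n)) = Submodule.span ℚ σ := le_antisymm h1 le_top
      rw [coneDim, ← this, finrank_top]
      simp [Module.finrank_pi]
    omega
  have hyτ : y ∈ τ := hσsub hyσ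
  obtain ⟨Tτ, hTτ⟩ := hτ
  have hpτ : ∀ ε : ℚ, 0 ≤ ε → ε ≤ 1 → y + ε • (w - y) ∈ τ := by
    intro ε h0 h1
    have heq : y + ε • (w - y) = (1 - ε) • y + ε • w := by module
    rw [heq, hTτ]
    rw [hTτ] at hyτ hwτ
    exact add_mem_coneHull (smul_mem_coneHull hyτ (by linarith)) (smul_mem_coneHull hwτ h0)
  -- pigeonhole: a single cone receives infinitely many points of the segment
  have hfin : Finite ↥X' := hfan.1.to_subtype
  have hchoice : ∀ k : ℕ, ∃ σ' ∈ X', y + (1/(k+2) : ℚ) • (w - y) ∈ σ' := by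
    intro k
    have hpos : (0:ℚ) < 1/(k+2) := by positivity
    have hle : (1/(k+2) : ℚ) ≤ 1 := by
      rw [div_le_one (by positivity)]
      have : (0:ℚ) ≤ k := Nat.cast_nonneg k
      linarith
    have := hpτ _ hpos.le hle
    rw [← hsupp] at this
    obtain ⟨σ', hσ', hmem⟩ := this
    exact ⟨σ', hσ', hmem⟩
  choose f hfX hfmem using hchoice
  have hfib : ∃ σ'' : ↥X', {k : ℕ | (⟨f k, hfX k⟩ : ↥X') = σ''}.Infinite := by
    obtain ⟨c, hc⟩ := Finite.exists_infinite_fiber (fun k : ℕ => (⟨f k, hfX k⟩ : ↥X'))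
    exact ⟨c, Set.infinite_coe_iff.mp hc⟩
  obtain ⟨⟨σ'', hσ''X⟩, hK⟩ := hfib
  have hKmem : ∀ k ∈ {k : ℕ | (⟨f k, hfX k⟩ : ↥X') = ⟨σ'', hσ''X⟩},
      y + (1/(k+2) : ℚ) • (w - y) ∈ σ'' := by
    intro k hk
    have := hfmem k
    have heq : f k = σ'' := congrArg Subtype.val hk
    rwa [heq] at this
  have hσ''poly : IsPolyCone σ'' := (hfan.2.1 σ'' hσ''X).1
  -- y belongs to σ''
  have hyσ'' : y ∈ σ'' := by
    apply hσ''poly.mem_of_small (w := w - y)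
    intro δ hδ
    obtain ⟨b, hbK, hbgt⟩ := hK.exists_gt ⌈(1/δ : ℚ)⌉₊
    refine ⟨1/(b+2), by positivity, ?_, hKmem b hbK⟩
    have h1 : (1/δ : ℚ) ≤ ⌈(1/δ : ℚ)⌉₊ := Nat.le_ceil _
    have h2 : ((⌈(1/δ : ℚ)⌉₊ : ℚ)) ≤ b := by exact_mod_cast hbgt.le
    have h3 : (1/δ : ℚ) ≤ b + 2 := by linarith
    rw [div_le_iff₀ (by positivity)]
    calc (1:ℚ) = δ * (1/δ) := by field_simp
    _ ≤ δ * (b + 2) := mul_le_mul_of_nonneg_left h3 hδ.le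
  -- a point of σ'' outside the span of σ
  obtain ⟨k₀, hk₀⟩ := hK.nonempty
  set ε₀ : ℚ := 1/(k₀+2) with hε₀def
  have hp₀ : y + ε₀ • (w - y) ∈ σ'' := hKmem k₀ hk₀
  have hp₀span : y + ε₀ • (w - y) ∉ Submodule.span ℚ σ := by
    intro hmem
    apply hw
    have hyspan : y ∈ Submodule.span ℚ σ := Submodule.subset_span hyσ
    have hε₀ne : ε₀ ≠ 0 := by positivity
    have : w = ε₀⁻¹ • (y + ε₀ • (w - y)) - ε₀⁻¹ • ((1 - ε₀) • y) := by
      match_scalars <;> field_simp <;> ring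
    rw [this]
    exact Submodule.sub_mem _ (Submodule.smul_mem _ _ hmem)
      (Submodule.smul_mem _ _ (Submodule.smul_mem _ _ hyspan))
  -- σ ∩ σ'' is a face of σ containing the interior point y, hence σ ⊆ σ''
  have hface : IsFaceOf (σ ∩ σ'') σ := (hfan.2.2.2 σ hσX σ'' hσ''X).1
  have hsub : σ ⊆ σ ∩ σ'' := hint _ hface ⟨hyσ, hyσ''⟩
  have hσσ'' : σ ⊆ σ'' := hsub.trans Set.inter_subset_right
  exact ⟨σ'', hσ''X, hσσ'', coneDim_lt_of_notin_span hσσ'' hp₀ hp₀span⟩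

/-- Every cone of a subdivision of a full-dimensional cone lies in a full-dimensional cone. -/
lemma exists_fulldim {X' : Set (Set (V n))} (hfan : IsFan X') {τ : Set (V n)}
    (hτ : IsPolyCone τ) (hsupp : support X' = τ) (hfull : Submodule.span ℚ τ = ⊤) :
    ∀ σ ∈ X', ∃ σf ∈ X', σ ⊆ σf ∧ coneDim σf = n := by
  suffices h : ∀ d : ℕ, ∀ σ ∈ X', n - coneDim σ ≤ d → ∃ σf ∈ X', σ ⊆ σf ∧ coneDim σf = n by
    intro σ hσ
    exact h n σ hσ (by omega)
  intro d
  induction d with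
  | zero =>
    intro σ hσ hd
    have h1 : coneDim σ ≤ n := coneDim_le_top σ
    exact ⟨σ, hσ, le_refl _, by omega⟩
  | succ d ih =>
    intro σ hσ hd
    by_cases hc : coneDim σ = n
    · exact ⟨σ, hσ, le_refl _, hc⟩
    · have hlt : coneDim σ < n := lt_of_le_of_ne (coneDim_le_top σ) hc
      obtain ⟨σ'', hσ''X, hsub, hdim⟩ := dim_bump hfan hτ hsupp hfull hσ hlt
      obtain ⟨σf, hσfX, hsub', hdimf⟩ := ih σ'' hσ''X (by omega)
      exact ⟨σf, hσfX, hsub.trans hsub', hdimf⟩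

end Purity
/-- the combinatorial pushforward formula
`φ(ζ) = ⋂ᵢ φᵢ(Ξᵢ(ζ))` for a subdivision with full-dimensional cones `τ₁, …, τ_k`. -/
theorem phi_pushforward {n : ℕ} (τ : Set (V n)) (B C : Set (Set (V n)))
    (hτ : IsPolyCone τ) (hsc : StronglyConvex τ)
    (hfull : Submodule.span ℚ τ = ⊤)
    (hT : IsTripleData (faces τ) B C)
    (X' B' C' : Set (Set (V n))) (hsub : IsSubdivision X' (faces τ))
    (hT' : IsTripleData X' B' C')
    (k : ℕ) (τ' : Fin k → Set (V n))
    (hτ' : ∀ i, τ' i ∈ X' ∧ coneDim (τ' i) = n)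
    (hτ'' : ∀ σ ∈ X', coneDim σ = n → ∃ i, σ = τ' i)
    (hB' : ∀ ν' ∈ B', ∀ ζ, IsFaceOf ζ τ → ν' ⊆ ζ →
      (∀ ζ₂, IsFaceOf ζ₂ τ → ν' ⊆ ζ₂ → ζ ⊆ ζ₂) → ∃ β ∈ B, IsRayOf β ζ)
    (hC' : ∀ ν' ∈ C', IsRayOf ν' τ → ν' ∈ C)
    (hBB' : B ⊆ B')
    (hCdom : ∀ ν' ∈ raysIn X', ∀ ζ, IsFaceOf ζ τ → ν' ⊆ ζ →
      (∀ ζ₂, IsFaceOf ζ₂ τ → ν' ⊆ ζ₂ → ζ ⊆ ζ₂) →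
      (∃ c ∈ C, IsRayOf c ζ) → (¬ ∃ b ∈ B, IsRayOf b ζ) → ν' ∈ C') :
    ∀ ζ, IsFaceOf ζ τ → ∀ Ξ : Fin k → Set (V n),
      (∀ i, IsFaceOf (Ξ i) (τ' i) ∧ Ξ i ⊆ ζ ∧
        ∀ F, IsFaceOf F (τ' i) → F ⊆ ζ → F ⊆ Ξ i) →
      phiMap B C ζ = ⨅ i, phiMap B' C' (Ξ i) := by
  intro ζ hζ Ξ hΞ
  classical
  have hfanX' : IsFan X' := hsub.1
  have hsupp : support X' = τ := hsub.2.1.trans (support_faces hτ)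
  have hX'poly : ∀ σ ∈ X', IsPolyCone σ := fun σ h => (hfanX'.2.1 σ h).1
  have hX'subτ : ∀ σ' ∈ X', σ' ⊆ τ := by
    intro σ' h
    obtain ⟨σ, hσf, hsub'⟩ := hsub.2.2 σ' h
    exact hsub'.trans hσf.subset
  have hζsub : ζ ⊆ τ := hζ.subset
  have hζpoly : IsPolyCone ζ := hζ.isPolyCone hτ
  have hζsc : StronglyConvex ζ := hsc.mono hζsub
  have hτ'sub : ∀ i, τ' i ⊆ τ := fun i => hX'subτ _ (hτ' i).1
  -- the maximal face of `τ' i` inside `ζ` is the intersection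
  have hΞeq : ∀ i, Ξ i = ζ ∩ τ' i := by
    intro i
    obtain ⟨hΞface, hΞζ, hΞmax⟩ := hΞ i
    have hcut : IsFaceOf (ζ ∩ τ' i) (τ' i) := hζ.inter_subcone (hτ'sub i)
    apply Set.Subset.antisymm
    · exact Set.subset_inter hΞζ hΞface.subset
    · exact hΞmax _ hcut Set.inter_subset_left
  have hΞX' : ∀ i, Ξ i ∈ X' := fun i => hfanX'.2.2.1 _ (hτ' i).1 _ (hΞ i).1
  -- Claim A: a ray of ζ contained in τ' i is a ray of Ξ i
  have claimA : ∀ i ν, IsRayOf ν ζ → ν ⊆ τ' i → IsRayOf ν (Ξ i) := by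
    intro i ν hν hsubi
    have hντ : IsFaceOf ν τ := hν.1.trans hζ hτ
    have hface' : IsFaceOf ν (τ' i) :=
      (hντ.inter_subcone (hτ'sub i)).congr (Set.inter_eq_left.mpr hsubi)
    have hνΞ : ν ⊆ Ξ i := by
      rw [hΞeq i]
      exact Set.subset_inter hν.1.subset hsubi
    refine ⟨hface'.restrict hνΞ ?_, hν.2⟩
    rw [hΞeq i]
    exact Set.inter_subset_right
  -- Claim B: every ray of ζ is a cone of X' and lies in some τ' i
  have claimB : ∀ ν, IsRayOf ν ζ → ∃ i, ν ⊆ τ' i ∧ ν ∈ X' := by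
    intro ν hν
    obtain ⟨x, hxν, hx0⟩ := hν.exists_ne_zero
    have hxτ : x ∈ τ := hζsub (hν.1.subset hxν)
    rw [← hsupp] at hxτ
    obtain ⟨σ₀, hσ₀X, hxσ₀⟩ := hxτ
    have hνσ₀ : ν ⊆ σ₀ := hν.subset_of_mem hζpoly hζsc hxν hx0 (hX'poly _ hσ₀X) hxσ₀
    have hντ : IsFaceOf ν τ := hν.1.trans hζ hτ
    have hνfσ₀ : IsFaceOf ν σ₀ :=
      (hντ.inter_subcone (hX'subτ _ hσ₀X)).congr (Set.inter_eq_left.mpr hνσ₀)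
    have hνX' : ν ∈ X' := hfanX'.2.2.1 σ₀ hσ₀X ν hνfσ₀
    obtain ⟨σf, hσfX, hνσf, hσfdim⟩ := exists_fulldim hfanX' hτ hsupp hfull ν hνX'
    obtain ⟨i, rfl⟩ := hτ'' σf hσfX hσfdim
    exact ⟨i, hνσf, hνX'⟩
  -- rays of X' contained in ζ are rays of τ, and min faces inside ζ
  by_cases hBray : ∃ β ∈ B, IsRayOf β ζ
  · -- LHS = ⊥, and some Ξ i has a B'-ray
    obtain ⟨β, hβB, hβζ⟩ := hBray
    have hβB' : β ∈ B' := hBB' hβB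
    obtain ⟨i, hβτi, hβX'⟩ := claimB β hβζ
    have hβΞ : IsRayOf β (Ξ i) := claimA i β hβζ hβτi
    have hphii : phiMap B' C' (Ξ i) = ⊥ := by
      unfold phiMap
      rw [if_pos ⟨β, hβB', hβΞ⟩]
    have hLHS : phiMap B C ζ = ⊥ := by
      unfold phiMap
      rw [if_pos ⟨β, hβB, hβζ⟩]
    rw [hLHS]
    refine (le_antisymm bot_le (le_trans (iInf_le _ i) (le_of_eq hphii)))
  · -- no ray of ζ lies in B
    -- minimal faces of τ containing rays of X' inside ζ have no B-ray and (relevantly) no C-ray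
    have hminface : ∀ ν' : Set (V n), ν' ⊆ ζ →
        ∃ ζ₂, IsFaceOf ζ₂ τ ∧ ν' ⊆ ζ₂ ∧ (∀ G, IsFaceOf G τ → ν' ⊆ G → ζ₂ ⊆ G) ∧
          ζ₂ ⊆ ζ ∧ IsFaceOf ζ₂ ζ ∧ (∀ ρ, IsRayOf ρ ζ₂ → IsRayOf ρ ζ) := by
      intro ν' hν'ζ
      obtain ⟨ζ₂, hζ₂τ, hν'ζ₂, hmin⟩ := exists_min_face hτ (hν'ζ.trans hζsub)
      have hζ₂ζ : ζ₂ ⊆ ζ := hmin ζ hζ hν'ζ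
      have hζ₂face : IsFaceOf ζ₂ ζ := hζ₂τ.restrict hζ₂ζ hζsub
      refine ⟨ζ₂, hζ₂τ, hν'ζ₂, hmin, hζ₂ζ, hζ₂face, ?_⟩
      intro ρ hρ
      exact ⟨hρ.1.trans hζ₂face hζpoly, hρ.2⟩
    -- Claim D: no Ξ i has a B'-ray
    have claimD : ∀ i, ¬ ∃ ν' ∈ B', IsRayOf ν' (Ξ i) := by
      rintro i ⟨ν', hν'B', hν'Ξ⟩
      have hν'ζ : ν' ⊆ ζ := hν'Ξ.1.subset.trans (hΞ i).2.1
      obtain ⟨ζ₂, hζ₂τ, hν'ζ₂, hmin, hζ₂ζ, hζ₂face, hrays⟩ := hminface ν' hν'ζ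
      obtain ⟨β, hβB, hβζ₂⟩ := hB' ν' hν'B' ζ₂ hζ₂τ hν'ζ₂ hmin
      exact hBray ⟨β, hβB, hrays β hβζ₂⟩
    apply le_antisymm
    · -- LHS ≤ RHS
      refine le_iInf fun i => ?_
      unfold phiMap
      rw [if_neg hBray, if_neg (claimD i)]
      refine le_iInf fun ν' => le_iInf fun hν' => ?_
      obtain ⟨hν'ray, hν'BC'⟩ := hν'
      intro m hm
      simp only [Submodule.mem_iInf] at hm
      -- ν' is a ray of X' contained in ζ
      have hν'ζ : ν' ⊆ ζ := hν'ray.1.subset.trans (hΞ i).2.1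
      have hν'X' : ν' ∈ X' := hfanX'.2.2.1 _ (hΞX' i) _ hν'ray.1
      obtain ⟨ζ₂, hζ₂τ, hν'ζ₂, hmin, hζ₂ζ, hζ₂face, hrays⟩ := hminface ν' hν'ζ
      have hnoB : ¬ ∃ b ∈ B, IsRayOf b ζ₂ := by
        rintro ⟨b, hbB, hbζ₂⟩
        exact hBray ⟨b, hbB, hrays b hbζ₂⟩
      have hν'notC' : ν' ∉ C' := fun h => hν'BC' (Set.mem_union_right _ h)
      have hnoC : ¬ ∃ c ∈ C, IsRayOf c ζ₂ := by
        intro hcc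
        exact hν'notC' (hCdom ν' ⟨hν'X', hν'ray.2⟩ ζ₂ hζ₂τ hν'ζ₂ hmin hcc hnoB)
      -- m vanishes on all rays of ζ₂
      have hkill : (⋃₀ raysOf ζ₂) ⊆ (LinearMap.ker m : Set (V n)) := by
        rintro z ⟨ρ, hρ, hzρ⟩
        have hρζ : IsRayOf ρ ζ := hrays ρ hρ
        have hρB : ρ ∉ B := fun h => hBray ⟨ρ, h, hρζ⟩
        have hρC : ρ ∉ C := fun h => hnoC ⟨ρ, h, hρ⟩
        have := hm ρ ⟨hρζ, fun hmem => by
          rcases hmem with h | h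
          · exact hρB h
          · exact hρC h⟩
        exact LinearMap.mem_ker.mpr (this z hzρ)
      have hspan : Submodule.span ℚ (⋃₀ raysOf ζ₂) ≤ LinearMap.ker m :=
        Submodule.span_le.mpr hkill
      intro x hx
      have hxζ₂ : x ∈ ζ₂ := hν'ζ₂ hx
      have hxspan : x ∈ Submodule.span ℚ (⋃₀ raysOf ζ₂) :=
        subset_span_rays (hζ₂τ.isPolyCone hτ) (hsc.mono hζ₂τ.subset) hxζ₂
      exact LinearMap.mem_ker.mp (hspan hxspan)
    · -- RHS ≤ LHS
      unfold phiMap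
      rw [if_neg hBray]
      refine le_iInf fun ν => le_iInf fun hν => ?_
      obtain ⟨hνray, hνBC⟩ := hν
      intro m hm
      simp only [Submodule.mem_iInf] at hm
      intro x hx
      by_cases hx0 : x = 0
      · rw [hx0, map_zero]
      obtain ⟨i, hντi, hνX'⟩ := claimB ν hνray
      have hνΞ : IsRayOf ν (Ξ i) := claimA i ν hνray hντi
      have hντ : IsRayOf ν τ := ⟨hνray.1.trans hζ hτ, hνray.2⟩
      have hνnotB' : ν ∉ B' := by
        intro hνB'
        obtain ⟨β, hβB, hβν⟩ := hB' ν hνB' ν hντ.1 (le_refl _) (fun _ _ h => h)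
        have hβeq : β = ν := IsRayOf.ray_eq_self hτ hsc hντ hβν
        exact hBray ⟨ν, hβeq ▸ hβB, hνray⟩
      have hνnotC' : ν ∉ C' := by
        intro hνC'
        exact hνBC (Set.mem_union_right _ (hC' ν hνC' hντ))
      have hmi := hm i
      unfold phiMap at hmi
      rw [if_neg (claimD i)] at hmi
      simp only [Submodule.mem_iInf] at hmi
      exact hmi ν ⟨hνΞ, fun hmem => by
        rcases hmem with h | h
        · exact hνnotB' h
        · exact hνnotC' h⟩ x hx

end ToricPaper
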